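/- 2π · ∫_{−1}^{1} g_2(t) · (3t² − 1)/2 dt = −π²/32. -/

import Mathlib

/-- C. Berg's function `g₂`. -/
noncomputable def bergG2 (t : ℝ) : ℝ :=
  (1 / (2 * Real.pi)) * ((Real.pi - Real.arccos t) * (1 - t ^ 2) ^ ((1 : ℝ) / 2) - t / 2)

open Real in
/-- Antiderivative of `bergG2 t * ((3 t ^ 2 - 1) / 2)`. -/
noncomputable def bergF2 (t : ℝ) : ℝ :=
  (1 / (2 * π)) * ((π - arccos t) * Real.sqrt (1 - t ^ 2) * (3 / 8 * t ^ 3 - 7 / 16 * t)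
    - (π - arccos t) ^ 2 / 32 - 9 / 32 * t ^ 4 + 11 / 32 * t ^ 2)

open Real in
lemma bergG2_eq (t : ℝ) :
    bergG2 t = (1 / (2 * π)) * ((π - arccos t) * Real.sqrt (1 - t ^ 2) - t / 2) := by
  rw [bergG2, Real.sqrt_eq_rpow]

open Real in
lemma bergF2_hasDerivAt {t : ℝ} (ht : t ∈ Set.Ioo (-1 : ℝ) 1) :
    HasDerivAt bergF2 (bergG2 t * ((3 * t ^ 2 - 1) / 2)) t := by
  obtain ⟨h1, h2⟩ := ht
  have h1t2 : (0 : ℝ) < 1 - t ^ 2 := by nlinarith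
  set s := Real.sqrt (1 - t ^ 2) with hs_def
  have hs : 0 < s := Real.sqrt_pos.mpr h1t2
  have hs2 : s ^ 2 = 1 - t ^ 2 := Real.sq_sqrt h1t2.le
  have hA : HasDerivAt arccos (-(1 / s)) t := hasDerivAt_arccos (by linarith) (by linarith)
  have hinner : HasDerivAt (fun x : ℝ => 1 - x ^ 2) (-(2 * t)) t := by
    simpa using ((hasDerivAt_pow 2 t).const_sub 1)
  have hsq : HasDerivAt (fun x : ℝ => Real.sqrt (1 - x ^ 2))
      (-(2 * t) / (2 * s)) t := by
    have := (Real.hasDerivAt_sqrt h1t2.ne').comp t hinner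
    exact hinner.sqrt h1t2.ne'
  have hB : HasDerivAt (fun x : ℝ => π - arccos x) (1 / s) t := by
    simpa using (hA.const_sub π)
  have hP : HasDerivAt (fun x : ℝ => 3 / 8 * x ^ 3 - 7 / 16 * x)
      (3 / 8 * (3 * t ^ 2) - 7 / 16) t := by
    exact (((hasDerivAt_pow 3 t).const_mul (3/8 : ℝ)).sub
      ((hasDerivAt_id t).const_mul (7/16 : ℝ))).congr_deriv (by norm_num)
  have hmain : HasDerivAt bergF2
      ((1 / (2 * π)) *
        (((1 / s * s + (π - arccos t) * (-(2 * t) / (2 * s))) *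
            (3 / 8 * t ^ 3 - 7 / 16 * t) +
          (π - arccos t) * s * (3 / 8 * (3 * t ^ 2) - 7 / 16))
          - (2 * (π - arccos t) * (1 / s)) / 32
          - 9 / 32 * (4 * t ^ 3) + 11 / 32 * (2 * t))) t := by
    unfold bergF2
    have hBs : HasDerivAt (fun x : ℝ => (π - arccos x) * Real.sqrt (1 - x ^ 2))
        (1 / s * s + (π - arccos t) * (-(2 * t) / (2 * s))) t := hB.mul hsq
    have hB2 : HasDerivAt (fun x : ℝ => (π - arccos x) ^ 2)
        (2 * (π - arccos t) * (1 / s)) t := by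
      have : HasDerivAt (fun x : ℝ => (π - arccos x) ^ 2) _ t := hB.pow 2
      simpa [mul_comm, mul_assoc, mul_left_comm] using this
    have h4 : HasDerivAt (fun x : ℝ => 9 / 32 * x ^ 4) (9 / 32 * (4 * t ^ 3)) t := by
      simpa using ((hasDerivAt_pow 4 t).const_mul (9/32 : ℝ))
    have h5 : HasDerivAt (fun x : ℝ => 11 / 32 * x ^ 2) (11 / 32 * (2 * t)) t := by
      simpa using ((hasDerivAt_pow 2 t).const_mul (11/32 : ℝ))
    exact ((((hBs.mul hP).sub (hB2.div_const 32)).sub h4).add h5).const_mul _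
  convert hmain using 1
  rw [bergG2_eq]
  have hpi : (π : ℝ) ≠ 0 := Real.pi_ne_zero
  field_simp
  linear_combination (-1024 * (Real.arccos t - π) * (6 * t ^ 2 - 1)) * hs2

open Real in
/-- `2π ∫_{−1}^{1} g₂(t) (3t²−1)/2 dt = −π²/32`. -/
theorem berg_g2_initial_value_2 :
    2 * Real.pi * ∫ t in (-1 : ℝ)..1, bergG2 t * ((3 * t ^ 2 - 1) / 2)
      = -(Real.pi ^ 2 / 32) := by
  have hpi : (π : ℝ) ≠ 0 := Real.pi_ne_zero
  have hcont : ContinuousOn bergF2 (Set.Icc (-1 : ℝ) 1) := by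
    apply Continuous.continuousOn
    unfold bergF2
    have h1 : Continuous fun t : ℝ => π - Real.arccos t :=
      continuous_const.sub Real.continuous_arccos
    have h2 : Continuous fun t : ℝ => Real.sqrt (1 - t ^ 2) :=
      Real.continuous_sqrt.comp (continuous_const.sub (continuous_pow 2))
    fun_prop
  have hint : IntervalIntegrable (fun t => bergG2 t * ((3 * t ^ 2 - 1) / 2))
      MeasureTheory.volume (-1 : ℝ) 1 := by
    apply Continuous.intervalIntegrable
    have : (fun t : ℝ => bergG2 t * ((3 * t ^ 2 - 1) / 2)) =
        fun t : ℝ => ((1 / (2 * π)) * ((π - arccos t) * Real.sqrt (1 - t ^ 2) - t / 2))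
          * ((3 * t ^ 2 - 1) / 2) := by
      funext t; rw [bergG2_eq]
    rw [this]
    have h1 : Continuous fun t : ℝ => π - Real.arccos t :=
      continuous_const.sub Real.continuous_arccos
    have h2 : Continuous fun t : ℝ => Real.sqrt (1 - t ^ 2) :=
      Real.continuous_sqrt.comp (continuous_const.sub (continuous_pow 2))
    fun_prop
  have key := intervalIntegral.integral_eq_sub_of_hasDerivAt_of_le
    (by norm_num : (-1 : ℝ) ≤ 1) hcont (fun x hx => bergF2_hasDerivAt hx) hint
  rw [key]
  unfold bergF2
  rw [Real.arccos_one, Real.arccos_neg_one]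
  norm_num
  field_simp
  ring
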